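/- Let G = C_{p^n q} with p, q distinct primes, and let S be a minimal generating set of a transfer system on G. If T, B, D denote the numbers of top arrows, bottom arrows, and diagonal arrows in S respectively, then T + B ≤ n, T + D ≤ n + 1, and B + D ≤ n + 1. Consequently |S| ≤ 3k+1 if n = 2k and |S| ≤ 3k+2 if n = 2k+1. -/

import Mathlib

/-- A transfer system on a lattice (the abelian case: closure under composition and
restriction suffices). -/
def IsLatTS {L : Type*} [Lattice L] (T : Set (L × L)) : Prop :=
  (∀ p ∈ T, p.1 ≤ p.2) ∧
  (∀ x : L, (x, x) ∈ T) ∧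
  (∀ a b c : L, (a, b) ∈ T → (b, c) ∈ T → (a, c) ∈ T) ∧
  (∀ a b : L, (a, b) ∈ T → ∀ c : L, c ≤ b → (a ⊓ c, c) ∈ T)

/-- The smallest lattice transfer system containing `S`. -/
def latGen {L : Type*} [Lattice L] (S : Set (L × L)) : Set (L × L) :=
  ⋂₀ {T | IsLatTS T ∧ S ⊆ T}

/-- `S` is a minimal generating set (of non-identity intervals) for the transfer system
`T` on a lattice. -/
def IsLatMinGen {L : Type*} [Lattice L] (S T : Set (L × L)) : Prop :=
  S ⊆ T ∧ (∀ p ∈ S, p.1 ≠ p.2) ∧ latGen S = T ∧ ∀ s ∈ S, latGen (S \ {s}) ⊂ T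

/-- The grid lattice `[n] × [1]`, modelling `Sub(C_{pⁿq})` with `(i, j) ↔ C_{pⁱqʲ}`. -/
abbrev Grid (n : ℕ) := Fin (n + 1) × Fin 2

/-- Top arrows `(i,1) → (j,1)`, `i < j`. -/
def IsTopArrow {n : ℕ} (p : Grid n × Grid n) : Prop :=
  p.1.2 = 1 ∧ p.2.2 = 1 ∧ p.1.1 < p.2.1

/-- Bottom arrows `(i,0) → (j,0)`, `i < j`. -/
def IsBottomArrow {n : ℕ} (p : Grid n × Grid n) : Prop :=
  p.1.2 = 0 ∧ p.2.2 = 0 ∧ p.1.1 < p.2.1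

/-- Diagonal arrows `(i,0) → (j,1)`, `i ≤ j`. -/
def IsDiagArrow {n : ℕ} (p : Grid n × Grid n) : Prop :=
  p.1.2 = 0 ∧ p.2.2 = 1 ∧ p.1.1 ≤ p.2.1

namespace GridTSAux

section LatGen

variable {L : Type*} [Lattice L]

lemma mem_latGen {S : Set (L × L)} {p : L × L}
    (h : ∀ U : Set (L × L), IsLatTS U → S ⊆ U → p ∈ U) : p ∈ latGen S :=
  Set.mem_sInter.mpr fun U hU => h U hU.1 hU.2

lemma latGen_mem_of {S : Set (L × L)} {p : L × L} (hp : p ∈ latGen S)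
    {U : Set (L × L)} (hU : IsLatTS U) (hSU : S ⊆ U) : p ∈ U :=
  Set.mem_sInter.mp hp U ⟨hU, hSU⟩

lemma subset_latGen (S : Set (L × L)) : S ⊆ latGen S :=
  fun _p hp => mem_latGen fun _U _ hSU => hSU hp

lemma latGen_refl (S : Set (L × L)) (x : L) : (x, x) ∈ latGen S :=
  mem_latGen fun _U hU _ => hU.2.1 x

lemma latGen_trans {S : Set (L × L)} {a b c : L}
    (h1 : (a, b) ∈ latGen S) (h2 : (b, c) ∈ latGen S) : (a, c) ∈ latGen S :=
  mem_latGen fun U hU hSU => hU.2.2.1 a b c (latGen_mem_of h1 hU hSU) (latGen_mem_of h2 hU hSU)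

lemma latGen_restrict {S : Set (L × L)} {a b : L}
    (h : (a, b) ∈ latGen S) (c : L) (hc : c ≤ b) : (a ⊓ c, c) ∈ latGen S :=
  mem_latGen fun U hU hSU => hU.2.2.2 a b (latGen_mem_of h hU hSU) c hc

lemma isLatTS_latGen {S : Set (L × L)} (hS : ∀ p ∈ S, p.1 ≤ p.2) : IsLatTS (latGen S) := by
  refine ⟨?_, latGen_refl S, fun a b c h1 h2 => latGen_trans h1 h2,
    fun a b h c hc => latGen_restrict h c hc⟩
  intro p hp
  exact latGen_mem_of hp (U := {q : L × L | q.1 ≤ q.2})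
    ⟨fun q hq => hq, fun x => le_rfl, fun a b c h1 h2 => le_trans h1 h2,
      fun a b _h c _hc => inf_le_right⟩ hS

lemma minGen_not_mem {S T : Set (L × L)} (hT : IsLatTS T) (hS : IsLatMinGen S T)
    {s : L × L} (hs : s ∈ S) : s ∉ latGen (S \ {s}) := by
  intro hmem
  obtain ⟨hsub, _hne, hgen, hmin⟩ := hS
  have h1 : S ⊆ latGen (S \ {s}) := by
    intro x hx
    by_cases hxs : x = s
    · subst hxs; exact hmem
    · exact subset_latGen _ ⟨hx, hxs⟩
  have h2 : IsLatTS (latGen (S \ {s})) :=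
    isLatTS_latGen fun p hp => hT.1 p (hsub hp.1)
  have h3 : latGen S ⊆ latGen (S \ {s}) := fun p hp => latGen_mem_of hp h2 h1
  rw [hgen] at h3
  exact (hmin s hs).not_subset h3

lemma mem_G {S : Set (L × L)} (s : L × L) {x : L × L} (hx : x ∈ S) (hxs : x ≠ s) :
    x ∈ latGen (S \ {s}) :=
  subset_latGen _ ⟨hx, hxs⟩

end LatGen

section GridSec

variable {n : ℕ} {X : Set (Grid n × Grid n)}

lemma arrow_eta {p : Grid n × Grid n} {x y : Fin 2} (h1 : p.1.2 = x) (h2 : p.2.2 = y) :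
    p = ((p.1.1, x), (p.2.1, y)) := by
  obtain ⟨⟨a, b⟩, ⟨c, d⟩⟩ := p
  dsimp at h1 h2 ⊢
  rw [h1, h2]

lemma gstep_bot {i k i' : Fin (n + 1)} {j j' : Fin 2}
    (h : (((i, j) : Grid n), ((i', j') : Grid n)) ∈ latGen X) (hik : i ≤ k) (hki : k ≤ i') :
    (((i, 0) : Grid n), ((k, 0) : Grid n)) ∈ latGen X := by
  have hres := latGen_restrict h ((k, 0) : Grid n)
    (Prod.mk_le_mk.mpr ⟨hki, by omega⟩)
  rwa [Prod.mk_inf_mk, inf_eq_left.mpr hik,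
    inf_eq_right.mpr (show (0 : Fin 2) ≤ j by omega)] at hres

lemma gstep_one {i k i' : Fin (n + 1)} {j : Fin 2}
    (h : (((i, j) : Grid n), ((i', 1) : Grid n)) ∈ latGen X) (hki : k ≤ i') :
    (((i ⊓ k, j) : Grid n), ((k, 1) : Grid n)) ∈ latGen X := by
  have hres := latGen_restrict h ((k, 1) : Grid n) (Prod.mk_le_mk.mpr ⟨hki, le_refl _⟩)
  rwa [Prod.mk_inf_mk, inf_eq_left.mpr (show j ≤ (1 : Fin 2) by omega)] at hres

lemma gstep_top {i k i' : Fin (n + 1)}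
    (h : (((i, 1) : Grid n), ((i', 1) : Grid n)) ∈ latGen X) (hik : i ≤ k) (hki : k ≤ i') :
    (((i, 1) : Grid n), ((k, 1) : Grid n)) ∈ latGen X := by
  have := gstep_one h hki
  rwa [inf_eq_left.mpr hik] at this

lemma gstep_diag {i k i' : Fin (n + 1)}
    (h : (((i, 0) : Grid n), ((i', 1) : Grid n)) ∈ latGen X) (hik : i ≤ k) (hki : k ≤ i') :
    (((i, 0) : Grid n), ((k, 1) : Grid n)) ∈ latGen X := by
  have := gstep_one h hki
  rwa [inf_eq_left.mpr hik] at this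

lemma gstep_vert {i k i' : Fin (n + 1)}
    (h : (((i, 0) : Grid n), ((i', 1) : Grid n)) ∈ latGen X) (hk : k ≤ i) (hki : k ≤ i') :
    (((k, 0) : Grid n), ((k, 1) : Grid n)) ∈ latGen X := by
  have := gstep_one h hki
  rwa [inf_eq_right.mpr hk] at this

noncomputable def botRset (X : Set (Grid n × Grid n)) (c : Fin (n + 1)) :
    Finset (Fin (n + 1)) :=
  @Finset.filter _ (fun y => (((c, 0) : Grid n), ((y, 0) : Grid n)) ∈ latGen X)
    (fun _ => Classical.propDecidable _) Finset.univ

lemma mem_botRset {c y : Fin (n + 1)} :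
    y ∈ botRset X c ↔ (((c, 0) : Grid n), ((y, 0) : Grid n)) ∈ latGen X := by
  classical
  unfold botRset
  exact ⟨fun h => (Finset.mem_filter.mp h).2,
    fun h => Finset.mem_filter.mpr ⟨Finset.mem_univ _, h⟩⟩

lemma botRset_nonempty (X : Set (Grid n × Grid n)) (c : Fin (n + 1)) :
    (botRset X c).Nonempty :=
  ⟨c, mem_botRset.mpr (latGen_refl X ((c, 0) : Grid n))⟩

noncomputable def botR (X : Set (Grid n × Grid n)) (c : Fin (n + 1)) : Fin (n + 1) :=
  (botRset X c).max' (botRset_nonempty X c)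

lemma botR_mem (X : Set (Grid n × Grid n)) (c : Fin (n + 1)) :
    (((c, 0) : Grid n), ((botR X c, 0) : Grid n)) ∈ latGen X :=
  mem_botRset.mp ((botRset X c).max'_mem (botRset_nonempty X c))

lemma le_botR {c y : Fin (n + 1)}
    (h : (((c, 0) : Grid n), ((y, 0) : Grid n)) ∈ latGen X) : y ≤ botR X c :=
  Finset.le_max' _ _ (mem_botRset.mpr h)

noncomputable def topRset (X : Set (Grid n × Grid n)) (e : Fin (n + 1)) :
    Finset (Fin (n + 1)) :=
  @Finset.filter _ (fun z => z = e ∨ (((e, 0) : Grid n), ((z, 1) : Grid n)) ∈ latGen X)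
    (fun _ => Classical.propDecidable _) Finset.univ

lemma mem_topRset {e z : Fin (n + 1)} :
    z ∈ topRset X e ↔ (z = e ∨ (((e, 0) : Grid n), ((z, 1) : Grid n)) ∈ latGen X) := by
  unfold topRset
  exact ⟨fun h => ((@Finset.mem_filter _ _ (fun _ => Classical.propDecidable _) _ _).mp h).2,
    fun h => (@Finset.mem_filter _ _ (fun _ => Classical.propDecidable _) _ _).mpr
      ⟨Finset.mem_univ _, h⟩⟩

lemma topRset_nonempty (X : Set (Grid n × Grid n)) (e : Fin (n + 1)) :
    (topRset X e).Nonempty :=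
  ⟨e, mem_topRset.mpr (Or.inl rfl)⟩

noncomputable def topR (X : Set (Grid n × Grid n)) (e : Fin (n + 1)) : Fin (n + 1) :=
  (topRset X e).max' (topRset_nonempty X e)

lemma topR_spec (X : Set (Grid n × Grid n)) (e : Fin (n + 1)) :
    topR X e = e ∨ (((e, 0) : Grid n), ((topR X e, 1) : Grid n)) ∈ latGen X :=
  mem_topRset.mp ((topRset X e).max'_mem (topRset_nonempty X e))

lemma le_topR {e z : Fin (n + 1)}
    (h : (((e, 0) : Grid n), ((z, 1) : Grid n)) ∈ latGen X) : z ≤ topR X e :=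
  Finset.le_max' _ _ (mem_topRset.mpr (Or.inr h))

lemma self_le_topR (X : Set (Grid n × Grid n)) (e : Fin (n + 1)) : e ≤ topR X e :=
  Finset.le_max' _ _ (mem_topRset.mpr (Or.inl rfl))

end GridSec

section Main

variable {n : ℕ} {T S : Set (Grid n × Grid n)}

lemma arrow_types (hT : IsLatTS T) (hS : IsLatMinGen S T) {p : Grid n × Grid n} (hp : p ∈ S) :
    IsTopArrow p ∨ IsBottomArrow p ∨ IsDiagArrow p := by
  have hle : p.1 ≤ p.2 := hT.1 p (hS.1 hp)
  have hne : p.1 ≠ p.2 := hS.2.1 p hp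
  obtain ⟨⟨i, j⟩, ⟨i', j'⟩⟩ := p
  obtain ⟨h1, h2⟩ := Prod.mk_le_mk.mp hle
  dsimp at hne ⊢
  have hj : j = 0 ∨ j = 1 := by omega
  have hj' : j' = 0 ∨ j' = 1 := by omega
  rcases hj with rfl | rfl <;> rcases hj' with rfl | rfl
  · refine Or.inr (Or.inl ⟨rfl, rfl, lt_of_le_of_ne h1 ?_⟩)
    intro he; dsimp at he; exact hne (by rw [he])
  · exact Or.inr (Or.inr ⟨rfl, rfl, h1⟩)
  · exact absurd h2 (by omega)
  · refine Or.inl ⟨rfl, rfl, lt_of_le_of_ne h1 ?_⟩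
    intro he; dsimp at he; exact hne (by rw [he])

lemma top_src_inj (hT : IsLatTS T) (hS : IsLatMinGen S T) :
    ∀ p ∈ S, ∀ q ∈ S, IsTopArrow p → IsTopArrow q → p.1.1 = q.1.1 → p = q := by
  intro p hp q hq htp htq hsrc
  by_contra hne
  rcases le_total p.2.1 q.2.1 with hbb | hbb
  · apply minGen_not_mem hT hS hp
    have hq' : q ∈ latGen (S \ {p}) := mem_G p hq (fun h => hne h.symm)
    rw [arrow_eta htq.1 htq.2.1, ← hsrc] at hq'
    have := gstep_top hq' (le_of_lt htp.2.2) hbb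
    rwa [← arrow_eta htp.1 htp.2.1] at this
  · apply minGen_not_mem hT hS hq
    have hp' : p ∈ latGen (S \ {q}) := mem_G q hp hne
    rw [arrow_eta htp.1 htp.2.1, hsrc] at hp'
    have := gstep_top hp' (le_of_lt htq.2.2) hbb
    rwa [← arrow_eta htq.1 htq.2.1] at this

lemma bot_src_inj (hT : IsLatTS T) (hS : IsLatMinGen S T) :
    ∀ p ∈ S, ∀ q ∈ S, IsBottomArrow p → IsBottomArrow q → p.1.1 = q.1.1 → p = q := by
  intro p hp q hq htp htq hsrc
  by_contra hne
  rcases le_total p.2.1 q.2.1 with hbb | hbb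
  · apply minGen_not_mem hT hS hp
    have hq' : q ∈ latGen (S \ {p}) := mem_G p hq (fun h => hne h.symm)
    rw [arrow_eta htq.1 htq.2.1, ← hsrc] at hq'
    have := gstep_bot hq' (le_of_lt htp.2.2) hbb
    rwa [← arrow_eta htp.1 htp.2.1] at this
  · apply minGen_not_mem hT hS hq
    have hp' : p ∈ latGen (S \ {q}) := mem_G q hp hne
    rw [arrow_eta htp.1 htp.2.1, hsrc] at hp'
    have := gstep_bot hp' (le_of_lt htq.2.2) hbb
    rwa [← arrow_eta htq.1 htq.2.1] at this

lemma diag_src_inj (hT : IsLatTS T) (hS : IsLatMinGen S T) :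
    ∀ p ∈ S, ∀ q ∈ S, IsDiagArrow p → IsDiagArrow q → p.1.1 = q.1.1 → p = q := by
  intro p hp q hq htp htq hsrc
  by_contra hne
  rcases le_total p.2.1 q.2.1 with hbb | hbb
  · apply minGen_not_mem hT hS hp
    have hq' : q ∈ latGen (S \ {p}) := mem_G p hq (fun h => hne h.symm)
    rw [arrow_eta htq.1 htq.2.1, ← hsrc] at hq'
    have := gstep_diag hq' htp.2.2 hbb
    rwa [← arrow_eta htp.1 htp.2.1] at this
  · apply minGen_not_mem hT hS hq
    have hp' : p ∈ latGen (S \ {q}) := mem_G q hp hne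
    rw [arrow_eta htp.1 htp.2.1, hsrc] at hp'
    have := gstep_diag hp' htq.2.2 hbb
    rwa [← arrow_eta htq.1 htq.2.1] at this


lemma vert_unique (hT : IsLatTS T) (hS : IsLatMinGen S T) :
    ∀ p ∈ S, ∀ q ∈ S, IsDiagArrow p → IsDiagArrow q →
      p.1.1 = p.2.1 → q.1.1 = q.2.1 → p = q := by
  intro p hp q hq hdp hdq hvp hvq
  obtain ⟨⟨a, a2⟩, ⟨b, b2⟩⟩ := p
  obtain ⟨⟨c, c2⟩, ⟨d, d2⟩⟩ := q
  obtain ⟨ha2, hb2, hab⟩ := hdp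
  obtain ⟨hc2, hd2, hcd⟩ := hdq
  dsimp at ha2 hb2 hc2 hd2 hvp hvq hab hcd
  subst ha2; subst hb2; subst hc2; subst hd2; subst hvp; subst hvq
  by_contra hne
  rcases lt_trichotomy a c with hlt | heq | hlt
  · apply minGen_not_mem hT hS hp
    have hq' : (((c, 0) : Grid n), ((c, 1) : Grid n)) ∈ latGen (S \ {((a, 0), (a, 1))}) :=
      mem_G _ hq (fun h => hne h.symm)
    exact gstep_vert hq' (le_of_lt hlt) (le_of_lt hlt)
  · subst heq; exact hne rfl
  · apply minGen_not_mem hT hS hq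
    have hp' : (((a, 0) : Grid n), ((a, 1) : Grid n)) ∈ latGen (S \ {((c, 0), (c, 1))}) :=
      mem_G _ hp hne
    exact gstep_vert hp' (le_of_lt hlt) (le_of_lt hlt)

lemma ineq_TB (hT : IsLatTS T) (hS : IsLatMinGen S T) :
    {p ∈ S | IsTopArrow p}.ncard + {p ∈ S | IsBottomArrow p}.ncard ≤ n := by
  classical
  have hmin : ∀ s ∈ S, s ∉ latGen (S \ {s}) := fun s hs => minGen_not_mem hT hS hs
  set Sh : Grid n × Grid n → Prop := fun p => ∃ t ∈ S, IsTopArrow t ∧ t.1.1 = p.1.1 with hSh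
  set φ : Grid n × Grid n → Fin (n + 1) := fun p =>
    if IsBottomArrow p ∧ Sh p then botR (S \ {p}) p.1.1 else p.1.1 with hφ
  have hφtop : ∀ r : Grid n × Grid n, IsTopArrow r → φ r = r.1.1 := by
    intro r hr
    have hc : ¬(IsBottomArrow r ∧ Sh r) := by
      rintro ⟨hrB, -⟩
      have h1 := hr.1
      rw [hrB.1] at h1
      exact absurd h1 (by decide)
    simp only [hφ]
    rw [if_neg hc]
  have hφshared : ∀ r, IsBottomArrow r → Sh r → φ r = botR (S \ {r}) r.1.1 := by
    intro r h1 h2; simp only [hφ]; rw [if_pos ⟨h1, h2⟩]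
  have hφns : ∀ r, IsBottomArrow r → ¬ Sh r → φ r = r.1.1 := by
    intro r h1 h2; simp only [hφ]; rw [if_neg (fun h => h2 h.2)]
  have hRprops : ∀ b ∈ S, IsBottomArrow b → Sh b →
      b.1.1 < botR (S \ {b}) b.1.1 ∧ botR (S \ {b}) b.1.1 < b.2.1 ∧
      (∀ g ∈ S, g ≠ b → g.1.1 < g.2.1 → g.1.1 ≠ botR (S \ {b}) b.1.1) := by
    intro b hb hbB hbSh
    obtain ⟨t, ht, htT, htsrc⟩ := hbSh
    have hbrel := botR_mem (S \ {b}) b.1.1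
    have htb : t ≠ b := by
      intro h
      have h1 := htT.1
      rw [h, hbB.1] at h1
      exact absurd h1 (by decide)
    refine ⟨?_, ?_, ?_⟩
    · have ht' : t ∈ latGen (S \ {b}) := mem_G b ht htb
      rw [arrow_eta htT.1 htT.2.1, htsrc] at ht'
      have hlt : b.1.1 < t.2.1 := htsrc ▸ htT.2.2
      have hstep := gstep_bot ht' (le_of_lt hlt) (le_refl t.2.1)
      have hle := le_botR hstep
      exact lt_of_lt_of_le hlt hle
    · by_contra hge
      push_neg at hge
      have hstep := gstep_bot hbrel (le_of_lt hbB.2.2) hge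
      apply hmin b hb
      rwa [← arrow_eta hbB.1 hbB.2.1] at hstep
    · intro g hg hgb hglt he
      have hg' : g ∈ latGen (S \ {b}) := mem_G b hg hgb
      have hstep := gstep_bot (i := g.1.1) (j := g.1.2) (i' := g.2.1) (j' := g.2.2)
        hg' (le_of_lt hglt) (le_refl g.2.1)
      rw [he] at hstep
      have hcomp := latGen_trans hbrel hstep
      have hle := le_botR hcomp
      omega
  have hRdist : ∀ b ∈ S, ∀ b' ∈ S, IsBottomArrow b → IsBottomArrow b' → Sh b → Sh b' →
      b.1.1 < b'.1.1 → botR (S \ {b}) b.1.1 ≠ botR (S \ {b'}) b'.1.1 := by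
    intro b hb b' hb' hbB hbB' hSb hSb' hlt heq
    have h2 := (hRprops b' hb' hbB' hSb').1
    rcases le_or_gt b'.1.1 (botR (S \ {b}) b.1.1) with hcase | hcase
    · have hstep := gstep_bot (botR_mem (S \ {b}) b.1.1) (le_of_lt hlt) hcase
      have hb'' : b' ∈ latGen (S \ {b}) :=
        mem_G b hb' (by intro h; rw [h] at hlt; exact lt_irrefl _ hlt)
      rw [arrow_eta hbB'.1 hbB'.2.1] at hb''
      have hcomp := latGen_trans hstep hb''
      have hle := le_botR hcomp
      have h3 := (hRprops b' hb' hbB' hSb').2.1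
      omega
    · omega
  have hinj : Set.InjOn φ ({p ∈ S | IsTopArrow p} ∪ {p ∈ S | IsBottomArrow p}) := by
    intro p hp q hq heq
    by_contra hne
    rcases hp with ⟨hpS, hpT⟩ | ⟨hpS, hpB⟩ <;> rcases hq with ⟨hqS, hqT⟩ | ⟨hqS, hqB⟩
    · rw [hφtop p hpT, hφtop q hqT] at heq
      exact hne (top_src_inj hT hS p hpS q hqS hpT hqT heq)
    · by_cases hq2 : Sh q
      · rw [hφtop p hpT, hφshared q hqB hq2] at heq
        exact (hRprops q hqS hqB hq2).2.2 p hpS hne hpT.2.2 heq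
      · rw [hφtop p hpT, hφns q hqB hq2] at heq
        exact hq2 ⟨p, hpS, hpT, heq⟩
    · by_cases hp2 : Sh p
      · rw [hφshared p hpB hp2, hφtop q hqT] at heq
        exact (hRprops p hpS hpB hp2).2.2 q hqS (fun h => hne h.symm) hqT.2.2 heq.symm
      · rw [hφns p hpB hp2, hφtop q hqT] at heq
        exact hp2 ⟨q, hqS, hqT, heq.symm⟩
    · by_cases hsrc : p.1.1 = q.1.1
      · exact hne (bot_src_inj hT hS p hpS q hqS hpB hqB hsrc)
      by_cases hp2 : Sh p <;> by_cases hq2 : Sh q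
      · rw [hφshared p hpB hp2, hφshared q hqB hq2] at heq
        rcases lt_or_gt_of_ne hsrc with h | h
        · exact hRdist p hpS q hqS hpB hqB hp2 hq2 h heq
        · exact hRdist q hqS p hpS hqB hpB hq2 hp2 h heq.symm
      · rw [hφshared p hpB hp2, hφns q hqB hq2] at heq
        exact (hRprops p hpS hpB hp2).2.2 q hqS (fun h => hne h.symm) hqB.2.2 heq.symm
      · rw [hφns p hpB hp2, hφshared q hqB hq2] at heq
        exact (hRprops q hqS hqB hq2).2.2 p hpS hne hpB.2.2 heq
      · rw [hφns p hpB hp2, hφns q hqB hq2] at heq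
        exact hsrc heq
  have hbound : ∀ p ∈ ({p ∈ S | IsTopArrow p} ∪ {p ∈ S | IsBottomArrow p}), (φ p).val < n := by
    intro p hp
    rcases hp with ⟨hpS, hpT⟩ | ⟨hpS, hpB⟩
    · rw [hφtop p hpT]
      have h1 := hpT.2.2
      have h2 := p.2.1.isLt
      omega
    · by_cases hp2 : Sh p
      · rw [hφshared p hpB hp2]
        have h1 := (hRprops p hpS hpB hp2).2.1
        have h2 := p.2.1.isLt
        omega
      · rw [hφns p hpB hp2]
        have h1 := hpB.2.2
        have h2 := p.2.1.isLt
        omega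
  have himg : φ '' ({p ∈ S | IsTopArrow p} ∪ {p ∈ S | IsBottomArrow p}) ⊆
      Set.univ \ {Fin.last n} := by
    rintro _ ⟨p, hp, rfl⟩
    refine ⟨Set.mem_univ _, ?_⟩
    simp only [Set.mem_singleton_iff]
    intro h
    have hv := hbound p hp
    rw [h, Fin.val_last] at hv
    omega
  have h1 : ({p ∈ S | IsTopArrow p} ∪ {p ∈ S | IsBottomArrow p}).ncard =
      (φ '' ({p ∈ S | IsTopArrow p} ∪ {p ∈ S | IsBottomArrow p})).ncard :=
    (Set.ncard_image_of_injOn hinj).symm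
  have h2 := Set.ncard_le_ncard himg (Set.toFinite _)
  have h3 : (Set.univ \ {Fin.last n} : Set (Fin (n + 1))).ncard = n := by
    rw [Set.ncard_diff_singleton_of_mem (Set.mem_univ _), Set.ncard_univ,
      Nat.card_eq_fintype_card, Fintype.card_fin]
    omega
  have hdisj : Disjoint {p ∈ S | IsTopArrow p} {p ∈ S | IsBottomArrow p} := by
    rw [Set.disjoint_left]
    rintro p ⟨-, hpT⟩ ⟨-, hpB⟩
    have hx := hpT.1
    rw [hpB.1] at hx
    exact absurd hx (by decide)
  have hu := Set.ncard_union_eq hdisj (Set.toFinite _) (Set.toFinite _)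
  omega

lemma ineq_TD (hT : IsLatTS T) (hS : IsLatMinGen S T) :
    {p ∈ S | IsTopArrow p}.ncard + {p ∈ S | IsDiagArrow p}.ncard ≤ n + 1 := by
  classical
  have hmin : ∀ s ∈ S, s ∉ latGen (S \ {s}) := fun s hs => minGen_not_mem hT hS hs
  rcases Set.eq_empty_or_nonempty {p ∈ S | IsDiagArrow p} with hD | hDne
  · rw [hD, Set.ncard_empty]
    have hinj : Set.InjOn (fun p : Grid n × Grid n => p.1.1) {p ∈ S | IsTopArrow p} := by
      intro p hp q hq heq
      exact top_src_inj hT hS p hp.1 q hq.1 hp.2 hq.2 heq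
    have hb : {p ∈ S | IsTopArrow p}.ncard ≤ n + 1 := by
      have e1 := (Set.ncard_image_of_injOn hinj).symm
      have e2 := Set.ncard_le_ncard
        (Set.subset_univ ((fun p : Grid n × Grid n => p.1.1) '' {p ∈ S | IsTopArrow p}))
        Set.finite_univ
      have e3 : (Set.univ : Set (Fin (n + 1))).ncard = n + 1 := by
        rw [Set.ncard_univ, Nat.card_eq_fintype_card, Fintype.card_fin]
      omega
    omega
  · obtain ⟨M, hM𝒟, hMmax⟩ := Set.Finite.exists_maximalFor
      (fun p : Grid n × Grid n => p.1.1) {p ∈ S | IsDiagArrow p} (Set.toFinite _) hDne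
    have hMS : M ∈ S := hM𝒟.1
    have hMD : IsDiagArrow M := hM𝒟.2
    have hMmax' : ∀ d, d ∈ S → IsDiagArrow d → d ≠ M → d.1.1 < M.1.1 := by
      intro d hd hdD hdM
      rcases lt_or_ge d.1.1 M.1.1 with h | h
      · exact h
      · have heq := le_antisymm h (hMmax ⟨hd, hdD⟩ h)
        exact absurd (diag_src_inj hT hS d hd M hMS hdD hMD heq.symm) hdM
    have hcross : ∀ d, d ∈ S → IsDiagArrow d → d ≠ M →
        (((d.1.1, 0) : Grid n), ((topR (S \ {d}) d.1.1, 1) : Grid n)) ∈ latGen (S \ {d}) := by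
      intro d hd hdD hdM
      have hM' : M ∈ latGen (S \ {d}) := mem_G d hMS (fun h => hdM h.symm)
      rw [arrow_eta hMD.1 hMD.2.1] at hM'
      have hvert := gstep_vert hM' (le_of_lt (hMmax' d hd hdD hdM))
        (le_trans (le_of_lt (hMmax' d hd hdD hdM)) hMD.2.2)
      rcases topR_spec (S \ {d}) d.1.1 with h | h
      · rw [h]; exact hvert
      · exact h
    have hZlt : ∀ d, d ∈ S → IsDiagArrow d → d ≠ M → topR (S \ {d}) d.1.1 < d.2.1 := by
      intro d hd hdD hdM
      by_contra hge
      push_neg at hge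
      apply hmin d hd
      have hres := gstep_diag (hcross d hd hdD hdM) hdD.2.2 hge
      rwa [← arrow_eta hdD.1 hdD.2.1] at hres
    have hZnotop : ∀ d, d ∈ S → IsDiagArrow d → d ≠ M →
        ∀ t ∈ S, IsTopArrow t → t.1.1 ≠ topR (S \ {d}) d.1.1 := by
      intro d hd hdD hdM t ht htT he
      have htd : t ≠ d := by
        intro h
        have h1 := htT.1
        rw [h, hdD.1] at h1
        exact absurd h1 (by decide)
      have ht' : t ∈ latGen (S \ {d}) := mem_G d ht htd
      rw [arrow_eta htT.1 htT.2.1, he] at ht'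
      have hcomp := latGen_trans (hcross d hd hdD hdM) ht'
      have hle := le_topR hcomp
      have h2 := htT.2.2
      omega
    have hZdist : ∀ d, d ∈ S → IsDiagArrow d → d ≠ M → ∀ d', d' ∈ S → IsDiagArrow d' → d' ≠ M →
        d.1.1 < d'.1.1 → topR (S \ {d}) d.1.1 ≠ topR (S \ {d'}) d'.1.1 := by
      intro d hd hdD hdM d' hd' hdD' hdM' hlt heq
      rcases le_or_gt d'.1.1 (topR (S \ {d}) d.1.1) with hcase | hcase
      · have hstep := gstep_bot (hcross d hd hdD hdM) (le_of_lt hlt) hcase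
        have hd'' : d' ∈ latGen (S \ {d}) :=
          mem_G d hd' (by intro h; rw [h] at hlt; exact lt_irrefl _ hlt)
        rw [arrow_eta hdD'.1 hdD'.2.1] at hd''
        have hcomp := latGen_trans hstep hd''
        have hle := le_topR hcomp
        have h3 := hZlt d' hd' hdD' hdM'
        omega
      · have h4 := self_le_topR (S \ {d'}) d'.1.1
        omega
    set φ : Grid n × Grid n → Fin (n + 1) := fun p =>
      if IsDiagArrow p then topR (S \ {p}) p.1.1 else p.1.1 with hφ
    have hφtop : ∀ r : Grid n × Grid n, IsTopArrow r → φ r = r.1.1 := by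
      intro r hr
      have hc : ¬ IsDiagArrow r := by
        intro h
        have h1 := hr.1
        rw [h.1] at h1
        exact absurd h1 (by decide)
      simp only [hφ]
      rw [if_neg hc]
    have hφd : ∀ r, IsDiagArrow r → φ r = topR (S \ {r}) r.1.1 := by
      intro r hr; simp only [hφ]; rw [if_pos hr]
    have hinj : Set.InjOn φ ({p ∈ S | IsTopArrow p} ∪ ({p ∈ S | IsDiagArrow p} \ {M})) := by
      intro p hp q hq heq
      by_contra hne
      rcases hp with ⟨hpS, hpT⟩ | ⟨⟨hpS, hpD⟩, hpM⟩ <;>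
        rcases hq with ⟨hqS, hqT⟩ | ⟨⟨hqS, hqD⟩, hqM⟩
      · rw [hφtop p hpT, hφtop q hqT] at heq
        exact hne (top_src_inj hT hS p hpS q hqS hpT hqT heq)
      · rw [hφtop p hpT, hφd q hqD] at heq
        exact hZnotop q hqS hqD hqM p hpS hpT heq
      · rw [hφd p hpD, hφtop q hqT] at heq
        exact hZnotop p hpS hpD hpM q hqS hqT heq.symm
      · by_cases hsrc : p.1.1 = q.1.1
        · exact hne (diag_src_inj hT hS p hpS q hqS hpD hqD hsrc)
        · rw [hφd p hpD, hφd q hqD] at heq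
          rcases lt_or_gt_of_ne hsrc with h | h
          · exact hZdist p hpS hpD hpM q hqS hqD hqM h heq
          · exact hZdist q hqS hqD hqM p hpS hpD hpM h heq.symm
    have hbound : ∀ p ∈ ({p ∈ S | IsTopArrow p} ∪ ({p ∈ S | IsDiagArrow p} \ {M})),
        (φ p).val < n := by
      intro p hp
      rcases hp with ⟨hpS, hpT⟩ | ⟨⟨hpS, hpD⟩, hpM⟩
      · rw [hφtop p hpT]
        have hx1 := hpT.2.2
        have hx2 := p.2.1.isLt
        omega
      · rw [hφd p hpD]
        have hx1 := hZlt p hpS hpD hpM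
        have hx2 := p.2.1.isLt
        omega
    have himg : φ '' ({p ∈ S | IsTopArrow p} ∪ ({p ∈ S | IsDiagArrow p} \ {M})) ⊆
        Set.univ \ {Fin.last n} := by
      rintro _ ⟨p, hp, rfl⟩
      refine ⟨Set.mem_univ _, ?_⟩
      simp only [Set.mem_singleton_iff]
      intro h
      have hv := hbound p hp
      rw [h, Fin.val_last] at hv
      omega
    have h1 : ({p ∈ S | IsTopArrow p} ∪ ({p ∈ S | IsDiagArrow p} \ {M})).ncard =
        (φ '' ({p ∈ S | IsTopArrow p} ∪ ({p ∈ S | IsDiagArrow p} \ {M}))).ncard :=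
      (Set.ncard_image_of_injOn hinj).symm
    have h2 := Set.ncard_le_ncard himg (Set.toFinite _)
    have h3 : (Set.univ \ {Fin.last n} : Set (Fin (n + 1))).ncard = n := by
      rw [Set.ncard_diff_singleton_of_mem (Set.mem_univ _), Set.ncard_univ,
        Nat.card_eq_fintype_card, Fintype.card_fin]
      omega
    have hdisj : Disjoint {p ∈ S | IsTopArrow p} ({p ∈ S | IsDiagArrow p} \ {M}) := by
      rw [Set.disjoint_left]
      rintro p ⟨-, hpT⟩ ⟨⟨-, hpD⟩, -⟩
      have hx := hpT.1
      rw [hpD.1] at hx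
      exact absurd hx (by decide)
    have hu := Set.ncard_union_eq hdisj (Set.toFinite _) (Set.toFinite _)
    have hdM : ({p ∈ S | IsDiagArrow p} \ {M}).ncard = {p ∈ S | IsDiagArrow p}.ncard - 1 :=
      Set.ncard_diff_singleton_of_mem hM𝒟
    have hDpos : 0 < {p ∈ S | IsDiagArrow p}.ncard :=
      (Set.ncard_pos (Set.toFinite _)).mpr hDne
    omega

lemma ineq_BD (hT : IsLatTS T) (hS : IsLatMinGen S T) :
    {p ∈ S | IsBottomArrow p}.ncard + {p ∈ S | IsDiagArrow p}.ncard ≤ n + 1 := by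
  classical
  have hmin : ∀ s ∈ S, s ∉ latGen (S \ {s}) := fun s hs => minGen_not_mem hT hS hs
  -- split diagonals into nonvertical and vertical
  have hsplitD : {p ∈ S | IsDiagArrow p} =
      {p ∈ S | IsDiagArrow p ∧ p.1.1 ≠ p.2.1} ∪ {p ∈ S | IsDiagArrow p ∧ p.1.1 = p.2.1} := by
    ext p
    constructor
    · rintro ⟨hp, hd⟩
      by_cases h : p.1.1 = p.2.1
      · exact Or.inr ⟨hp, hd, h⟩
      · exact Or.inl ⟨hp, hd, h⟩
    · rintro (⟨hp, hd, -⟩ | ⟨hp, hd, -⟩) <;> exact ⟨hp, hd⟩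
  have hdisjD : Disjoint {p ∈ S | IsDiagArrow p ∧ p.1.1 ≠ p.2.1}
      {p ∈ S | IsDiagArrow p ∧ p.1.1 = p.2.1} := by
    rw [Set.disjoint_left]
    rintro p ⟨-, -, h1⟩ ⟨-, -, h2⟩
    exact h1 h2
  have hV1 : {p ∈ S | IsDiagArrow p ∧ p.1.1 = p.2.1}.ncard ≤ 1 := by
    rcases Set.eq_empty_or_nonempty {p ∈ S | IsDiagArrow p ∧ p.1.1 = p.2.1} with h | ⟨v, hv⟩
    · rw [h, Set.ncard_empty]; omega
    · have hsing : {p ∈ S | IsDiagArrow p ∧ p.1.1 = p.2.1} = {v} := by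
        apply Set.eq_singleton_iff_unique_mem.mpr
        exact ⟨hv, fun w hw => vert_unique hT hS w hw.1 v hv.1 hw.2.1 hv.2.1 hw.2.2 hv.2.2⟩
      rw [hsing, Set.ncard_singleton]
  -- the injection on bottoms and nonvertical diagonals
  set Sh : Grid n × Grid n → Prop :=
    fun p => ∃ g ∈ S, IsDiagArrow g ∧ g.1.1 ≠ g.2.1 ∧ g.1.1 = p.1.1 with hSh
  set φ : Grid n × Grid n → Fin (n + 1) := fun p =>
    if IsBottomArrow p ∧ Sh p then botR (S \ {p}) p.1.1 else p.1.1 with hφ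
  have hφd : ∀ r : Grid n × Grid n, IsDiagArrow r → φ r = r.1.1 := by
    intro r hr
    have hc : ¬(IsBottomArrow r ∧ Sh r) := by
      rintro ⟨hrB, -⟩
      have h1 := hr.2.1
      rw [hrB.2.1] at h1
      exact absurd h1 (by decide)
    simp only [hφ]
    rw [if_neg hc]
  have hφshared : ∀ r, IsBottomArrow r → Sh r → φ r = botR (S \ {r}) r.1.1 := by
    intro r h1 h2; simp only [hφ]; rw [if_pos ⟨h1, h2⟩]
  have hφns : ∀ r, IsBottomArrow r → ¬ Sh r → φ r = r.1.1 := by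
    intro r h1 h2; simp only [hφ]; rw [if_neg (fun h => h2 h.2)]
  have hRprops : ∀ b ∈ S, IsBottomArrow b → Sh b →
      b.1.1 < botR (S \ {b}) b.1.1 ∧ botR (S \ {b}) b.1.1 < b.2.1 ∧
      (∀ g ∈ S, g ≠ b → g.1.1 < g.2.1 → g.1.1 ≠ botR (S \ {b}) b.1.1) := by
    intro b hb hbB hbSh
    obtain ⟨t, ht, htD, htnv, htsrc⟩ := hbSh
    have hbrel := botR_mem (S \ {b}) b.1.1
    have htb : t ≠ b := by
      intro h
      have h1 := htD.2.1
      rw [h, hbB.2.1] at h1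
      exact absurd h1 (by decide)
    have htlt : t.1.1 < t.2.1 := lt_of_le_of_ne htD.2.2 htnv
    refine ⟨?_, ?_, ?_⟩
    · have ht' : t ∈ latGen (S \ {b}) := mem_G b ht htb
      rw [arrow_eta htD.1 htD.2.1, htsrc] at ht'
      have hlt : b.1.1 < t.2.1 := htsrc ▸ htlt
      have hstep := gstep_bot ht' (le_of_lt hlt) (le_refl t.2.1)
      have hle := le_botR hstep
      exact lt_of_lt_of_le hlt hle
    · by_contra hge
      push_neg at hge
      have hstep := gstep_bot hbrel (le_of_lt hbB.2.2) hge
      apply hmin b hb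
      rwa [← arrow_eta hbB.1 hbB.2.1] at hstep
    · intro g hg hgb hglt he
      have hg' : g ∈ latGen (S \ {b}) := mem_G b hg hgb
      have hstep := gstep_bot (i := g.1.1) (j := g.1.2) (i' := g.2.1) (j' := g.2.2)
        hg' (le_of_lt hglt) (le_refl g.2.1)
      rw [he] at hstep
      have hcomp := latGen_trans hbrel hstep
      have hle := le_botR hcomp
      omega
  have hRdist : ∀ b ∈ S, ∀ b' ∈ S, IsBottomArrow b → IsBottomArrow b' → Sh b → Sh b' →
      b.1.1 < b'.1.1 → botR (S \ {b}) b.1.1 ≠ botR (S \ {b'}) b'.1.1 := by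
    intro b hb b' hb' hbB hbB' hSb hSb' hlt heq
    have h2 := (hRprops b' hb' hbB' hSb').1
    rcases le_or_gt b'.1.1 (botR (S \ {b}) b.1.1) with hcase | hcase
    · have hstep := gstep_bot (botR_mem (S \ {b}) b.1.1) (le_of_lt hlt) hcase
      have hb'' : b' ∈ latGen (S \ {b}) :=
        mem_G b hb' (by intro h; rw [h] at hlt; exact lt_irrefl _ hlt)
      rw [arrow_eta hbB'.1 hbB'.2.1] at hb''
      have hcomp := latGen_trans hstep hb''
      have hle := le_botR hcomp
      have h3 := (hRprops b' hb' hbB' hSb').2.1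
      omega
    · omega
  have hinj : Set.InjOn φ
      ({p ∈ S | IsBottomArrow p} ∪ {p ∈ S | IsDiagArrow p ∧ p.1.1 ≠ p.2.1}) := by
    intro p hp q hq heq
    by_contra hne
    rcases hp with ⟨hpS, hpB⟩ | ⟨hpS, hpD, hpnv⟩ <;>
      rcases hq with ⟨hqS, hqB⟩ | ⟨hqS, hqD, hqnv⟩
    · by_cases hsrc : p.1.1 = q.1.1
      · exact hne (bot_src_inj hT hS p hpS q hqS hpB hqB hsrc)
      by_cases hp2 : Sh p <;> by_cases hq2 : Sh q
      · rw [hφshared p hpB hp2, hφshared q hqB hq2] at heq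
        rcases lt_or_gt_of_ne hsrc with h | h
        · exact hRdist p hpS q hqS hpB hqB hp2 hq2 h heq
        · exact hRdist q hqS p hpS hqB hpB hq2 hp2 h heq.symm
      · rw [hφshared p hpB hp2, hφns q hqB hq2] at heq
        exact (hRprops p hpS hpB hp2).2.2 q hqS (fun h => hne h.symm) hqB.2.2 heq.symm
      · rw [hφns p hpB hp2, hφshared q hqB hq2] at heq
        exact (hRprops q hqS hqB hq2).2.2 p hpS hne hpB.2.2 heq
      · rw [hφns p hpB hp2, hφns q hqB hq2] at heq
        exact hsrc heq
    · by_cases hp2 : Sh p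
      · rw [hφshared p hpB hp2, hφd q hqD] at heq
        exact (hRprops p hpS hpB hp2).2.2 q hqS (fun h => hne h.symm)
          (lt_of_le_of_ne hqD.2.2 hqnv) heq.symm
      · rw [hφns p hpB hp2, hφd q hqD] at heq
        exact hp2 ⟨q, hqS, hqD, hqnv, heq.symm⟩
    · by_cases hq2 : Sh q
      · rw [hφd p hpD, hφshared q hqB hq2] at heq
        exact (hRprops q hqS hqB hq2).2.2 p hpS hne
          (lt_of_le_of_ne hpD.2.2 hpnv) heq
      · rw [hφd p hpD, hφns q hqB hq2] at heq
        exact hq2 ⟨p, hpS, hpD, hpnv, heq⟩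
    · rw [hφd p hpD, hφd q hqD] at heq
      exact hne (diag_src_inj hT hS p hpS q hqS hpD hqD heq)
  have hbound : ∀ p ∈ ({p ∈ S | IsBottomArrow p} ∪ {p ∈ S | IsDiagArrow p ∧ p.1.1 ≠ p.2.1}),
      (φ p).val < n := by
    intro p hp
    rcases hp with ⟨hpS, hpB⟩ | ⟨hpS, hpD, hpnv⟩
    · by_cases hp2 : Sh p
      · rw [hφshared p hpB hp2]
        have hx1 := (hRprops p hpS hpB hp2).2.1
        have hx2 := p.2.1.isLt
        omega
      · rw [hφns p hpB hp2]
        have hx1 := hpB.2.2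
        have hx2 := p.2.1.isLt
        omega
    · rw [hφd p hpD]
      have hx1 := lt_of_le_of_ne hpD.2.2 hpnv
      have hx2 := p.2.1.isLt
      omega
  have himg : φ '' ({p ∈ S | IsBottomArrow p} ∪ {p ∈ S | IsDiagArrow p ∧ p.1.1 ≠ p.2.1}) ⊆
      Set.univ \ {Fin.last n} := by
    rintro _ ⟨p, hp, rfl⟩
    refine ⟨Set.mem_univ _, ?_⟩
    simp only [Set.mem_singleton_iff]
    intro h
    have hv := hbound p hp
    rw [h, Fin.val_last] at hv
    omega
  have h1 : ({p ∈ S | IsBottomArrow p} ∪ {p ∈ S | IsDiagArrow p ∧ p.1.1 ≠ p.2.1}).ncard =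
      (φ '' ({p ∈ S | IsBottomArrow p} ∪ {p ∈ S | IsDiagArrow p ∧ p.1.1 ≠ p.2.1})).ncard :=
    (Set.ncard_image_of_injOn hinj).symm
  have h2 := Set.ncard_le_ncard himg (Set.toFinite _)
  have h3 : (Set.univ \ {Fin.last n} : Set (Fin (n + 1))).ncard = n := by
    rw [Set.ncard_diff_singleton_of_mem (Set.mem_univ _), Set.ncard_univ,
      Nat.card_eq_fintype_card, Fintype.card_fin]
    omega
  have hdisj : Disjoint {p ∈ S | IsBottomArrow p} {p ∈ S | IsDiagArrow p ∧ p.1.1 ≠ p.2.1} := by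
    rw [Set.disjoint_left]
    rintro p ⟨-, hpB⟩ ⟨-, hpD, -⟩
    have hx := hpB.2.1
    rw [hpD.2.1] at hx
    exact absurd hx (by decide)
  have hu := Set.ncard_union_eq hdisj (Set.toFinite _) (Set.toFinite _)
  have hu2 := Set.ncard_union_eq hdisjD (Set.toFinite _) (Set.toFinite _)
  rw [← hsplitD] at hu2
  omega

end Main

end GridTSAux

theorem grid_minimal_gen_bounds (n : ℕ)
    (T S : Set (Grid n × Grid n)) (hT : IsLatTS T) (hS : IsLatMinGen S T) :
    ({p ∈ S | IsTopArrow p}.ncard + {p ∈ S | IsBottomArrow p}.ncard ≤ n) ∧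
    ({p ∈ S | IsTopArrow p}.ncard + {p ∈ S | IsDiagArrow p}.ncard ≤ n + 1) ∧
    ({p ∈ S | IsBottomArrow p}.ncard + {p ∈ S | IsDiagArrow p}.ncard ≤ n + 1) ∧
    (∀ k, n = 2 * k → S.ncard ≤ 3 * k + 1) ∧
    (∀ k, n = 2 * k + 1 → S.ncard ≤ 3 * k + 2) := by
  have h1 := GridTSAux.ineq_TB hT hS
  have h2 := GridTSAux.ineq_TD hT hS
  have h3 := GridTSAux.ineq_BD hT hS
  have hsplit : S = {p ∈ S | IsTopArrow p} ∪
      ({p ∈ S | IsBottomArrow p} ∪ {p ∈ S | IsDiagArrow p}) := by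
    ext p
    constructor
    · intro hp
      rcases GridTSAux.arrow_types hT hS hp with h | h | h
      · exact Or.inl ⟨hp, h⟩
      · exact Or.inr (Or.inl ⟨hp, h⟩)
      · exact Or.inr (Or.inr ⟨hp, h⟩)
    · rintro (⟨hp, -⟩ | ⟨hp, -⟩ | ⟨hp, -⟩) <;> exact hp
  have hd1 : Disjoint {p ∈ S | IsBottomArrow p} {p ∈ S | IsDiagArrow p} := by
    rw [Set.disjoint_left]
    rintro p ⟨-, hpB⟩ ⟨-, hpD⟩
    have hx := hpB.2.1
    rw [hpD.2.1] at hx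
    exact absurd hx (by decide)
  have hd2 : Disjoint {p ∈ S | IsTopArrow p}
      ({p ∈ S | IsBottomArrow p} ∪ {p ∈ S | IsDiagArrow p}) := by
    rw [Set.disjoint_union_right]
    constructor
    · rw [Set.disjoint_left]
      rintro p ⟨-, hpT⟩ ⟨-, hpB⟩
      have hx := hpT.1
      rw [hpB.1] at hx
      exact absurd hx (by decide)
    · rw [Set.disjoint_left]
      rintro p ⟨-, hpT⟩ ⟨-, hpD⟩
      have hx := hpT.1
      rw [hpD.1] at hx
      exact absurd hx (by decide)
  have e1 := Set.ncard_union_eq hd2 (Set.toFinite _) (Set.toFinite _)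
  have e2 := Set.ncard_union_eq hd1 (Set.toFinite _) (Set.toFinite _)
  have e0 : S.ncard = ({p ∈ S | IsTopArrow p} ∪
      ({p ∈ S | IsBottomArrow p} ∪ {p ∈ S | IsDiagArrow p})).ncard := by
    rw [← hsplit]
  refine ⟨h1, h2, h3, ?_, ?_⟩
  · intro k hk
    omega
  · intro k hk
    omega
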